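/- Let f(m) be the coefficient of t^m in the power series (1 + n t + b_2 t² + (b_2 − n + 1) t³)/(1+t)^n for n ≥ 3. Then for m ≥ 2, f(m) = (−1)^m · C(n+m−4, m−2) · (3(m−2) + m·b_2 − (2m−5)n − n²)/m. -/

import Mathlib

open PowerSeries

lemma inv_one_add_pow (n : ℕ) :
    ((1 + X : ℚ⟦X⟧) ^ n)⁻¹ = rescale (-1) (invOneSubPow ℚ n).val := by
  rw [PowerSeries.inv_eq_iff_mul_eq_one]
  · have h1 : (1 + X : ℚ⟦X⟧) ^ n = rescale (-1) ((1 - X) ^ n) := by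
      rw [map_pow, map_sub, map_one, rescale_X]
      ring_nf
      simp [map_neg]
    rw [h1, ← map_mul, ← invOneSubPow_inv_eq_one_sub_pow, (invOneSubPow ℚ n).val_inv, map_one]
  · simp

lemma coeff_inv_one_add_pow (n j : ℕ) (hn : 1 ≤ n) :
    coeff (R := ℚ) j ((1 + X : ℚ⟦X⟧) ^ n)⁻¹ = (-1) ^ j * ((n - 1 + j).choose j : ℚ) := by
  rw [inv_one_add_pow n, coeff_rescale,
    invOneSubPow_val_eq_mk_sub_one_add_choose_of_pos ℚ n hn, coeff_mk]
  have : (n - 1 + j).choose (n - 1) = (n - 1 + j).choose j := by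
    rw [← Nat.choose_symm (Nat.le_add_left j (n-1)), Nat.add_sub_cancel]
  rw [this]

lemma expand3 (n : ℕ) (b₂ : ℤ) (k : ℕ) (G : ℚ⟦X⟧) :
    coeff (R := ℚ) (k+3) ((1 + (n : ℚ⟦X⟧) * X + (b₂ : ℚ⟦X⟧) * X ^ 2 +
          ((b₂ : ℚ⟦X⟧) - (n : ℚ⟦X⟧) + 1) * X ^ 3) * G)
      = coeff (R := ℚ) (k+3) G + n * coeff (R := ℚ) (k+2) G + b₂ * coeff (R := ℚ) (k+1) G
        + ((b₂ : ℚ) - n + 1) * coeff (R := ℚ) k G := by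
  have h1 : coeff (R := ℚ) (k+3) (X * G) = coeff (R := ℚ) (k+2) G := by
    rw [show k+3 = (k+2)+1 by ring, coeff_succ_X_mul]
  have h2 : coeff (R := ℚ) (k+3) (X^2 * G) = coeff (R := ℚ) (k+1) G := by
    rw [show k+3 = (k+1)+2 by ring, coeff_X_pow_mul]
  have h3 : coeff (R := ℚ) (k+3) (X^3 * G) = coeff (R := ℚ) k G := coeff_X_pow_mul G 3 k
  rw [← map_natCast (C (R := ℚ)) n, ← map_intCast (C (R := ℚ)) b₂]
  simp only [add_mul, sub_mul, one_mul, mul_assoc, map_add, map_sub, coeff_C_mul, h1, h2, h3]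

lemma expand2 (n : ℕ) (b₂ : ℤ) (G : ℚ⟦X⟧) :
    coeff (R := ℚ) 2 ((1 + (n : ℚ⟦X⟧) * X + (b₂ : ℚ⟦X⟧) * X ^ 2 +
          ((b₂ : ℚ⟦X⟧) - (n : ℚ⟦X⟧) + 1) * X ^ 3) * G)
      = coeff (R := ℚ) 2 G + n * coeff (R := ℚ) 1 G + b₂ * coeff (R := ℚ) 0 G := by
  have h1 : coeff (R := ℚ) 2 (X * G) = coeff (R := ℚ) 1 G := by
    rw [show 2 = 1+1 by ring, coeff_succ_X_mul]
  have h2 : coeff (R := ℚ) 2 (X^2 * G) = coeff (R := ℚ) 0 G := by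
    rw [show 2 = 0+2 by ring, coeff_X_pow_mul]
  have h3 : coeff (R := ℚ) 2 (X^3 * G) = 0 := by
    rw [coeff_X_pow_mul']
    simp
  rw [← map_natCast (C (R := ℚ)) n, ← map_intCast (C (R := ℚ)) b₂]
  simp only [add_mul, sub_mul, one_mul, mul_assoc, map_add, map_sub, coeff_C_mul, h1, h2, h3]
  ring

lemma choose_ratio (N r : ℕ) : (((N+1).choose (r+1) : ℚ)) * (r+1) = (N+1) * (N.choose r) := by
  have h := Nat.add_one_mul_choose_eq N r
  have := congrArg (Nat.cast (R := ℚ)) h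
  push_cast at this
  linarith [this]

theorem coeff_hilbert_identity (n : ℕ) (hn : 3 ≤ n) (b₂ : ℤ) :
    ∀ m : ℕ, 2 ≤ m →
      (PowerSeries.coeff (R := ℚ) m)
        ((1 + (n : PowerSeries ℚ) * X + (b₂ : PowerSeries ℚ) * X ^ 2 +
          ((b₂ : PowerSeries ℚ) - (n : PowerSeries ℚ) + 1) * X ^ 3) * ((1 + X) ^ n)⁻¹)
      = (-1) ^ m * ((n + m - 4).choose (m - 2) : ℚ) *
          (3 * ((m : ℚ) - 2) + (m : ℚ) * (b₂ : ℚ) - (2 * (m : ℚ) - 5) * (n : ℚ) -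
            (n : ℚ) ^ 2) / (m : ℚ) := by
  obtain ⟨a, rfl⟩ : ∃ a, n = a + 3 := ⟨n - 3, by omega⟩
  intro m hm
  have hg : ∀ j, coeff (R := ℚ) j ((1 + X : ℚ⟦X⟧) ^ (a+3))⁻¹
      = (-1) ^ j * ((a + 2 + j).choose j : ℚ) := by
    intro j
    rw [coeff_inv_one_add_pow _ _ (by omega), show a+3-1 = a+2 by omega]
  rcases eq_or_lt_of_le hm with h | h
  · -- m = 2
    subst h
    rw [expand2, hg, hg, hg, show a+2+2 = a+4 by omega, show a+2+1 = a+3 by omega,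
      show a+3+2-4 = a+1 by omega, show 2-2 = 0 by omega, show a+2+0 = a+2 by omega]
    have e : ((a+4).choose 2 : ℚ) = ((a:ℚ)+4) * ((a:ℚ)+3) / 2 := by
      rw [eq_div_iff (by norm_num : (2:ℚ) ≠ 0)]
      have := choose_ratio (a+3) 1
      rw [Nat.choose_one_right] at this
      push_cast at this ⊢
      convert this using 2 <;> push_cast <;> ring
    rw [e]
    simp only [Nat.choose_zero_right, Nat.choose_self, Nat.choose_one_right]
    push_cast
    ring
  · obtain ⟨k, rfl⟩ : ∃ k, m = k + 3 := ⟨m - 3, by omega⟩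
    rw [expand3, hg, hg, hg, hg]
    rw [show a+3+(k+3)-4 = a+k+2 by omega, show k+3-2 = k+1 by omega,
      show a+2+(k+3) = a+k+5 by omega, show a+2+(k+2) = a+k+4 by omega,
      show a+2+(k+1) = a+k+3 by omega, show a+2+k = a+k+2 by omega]
    have hk1 : ((k:ℚ)+1) ≠ 0 := by positivity
    have hk2 : ((k:ℚ)+2) ≠ 0 := by positivity
    have hk3 : ((k:ℚ)+3) ≠ 0 := by positivity
    set B : ℚ := ((a+k+2).choose k : ℚ) with hB
    have e1 : ((a+k+2).choose (k+1) : ℚ) = ((a:ℚ)+2) * B / ((k:ℚ)+1) := by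
      rw [eq_div_iff hk1]
      have h := Nat.choose_succ_right_eq (a+k+2) k
      rw [show a+k+2-k = a+2 by omega] at h
      have := congrArg (Nat.cast (R := ℚ)) h
      push_cast at this
      linarith [this]
    have e2 : ((a+k+3).choose (k+1) : ℚ) = ((a:ℚ)+(k:ℚ)+3) * B / ((k:ℚ)+1) := by
      rw [eq_div_iff hk1]
      have := choose_ratio (a+k+2) k
      push_cast at this ⊢
      convert this using 2 <;> push_cast <;> ring
    have e3 : ((a+k+4).choose (k+2) : ℚ)
        = ((a:ℚ)+(k:ℚ)+4) * (((a+k+3).choose (k+1) : ℚ)) / ((k:ℚ)+2) := by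
      rw [eq_div_iff hk2]
      have := choose_ratio (a+k+3) (k+1)
      push_cast at this ⊢
      convert this using 2 <;> push_cast <;> ring
    have e4 : ((a+k+5).choose (k+3) : ℚ)
        = ((a:ℚ)+(k:ℚ)+5) * (((a+k+4).choose (k+2) : ℚ)) / ((k:ℚ)+3) := by
      rw [eq_div_iff hk3]
      have := choose_ratio (a+k+4) (k+2)
      push_cast at this ⊢
      convert this using 2 <;> push_cast <;> ring
    rw [e4, e3, e2, e1]
    push_cast
    field_simp
    ring
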